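/- In the differential field (ℂ(x), d/dx), a rational function f is stable (f ∈ (d/dx)^n(ℂ(x)) for all n ∈ ℕ) if and only if f is a polynomial in ℂ[x]. -/

import Mathlib

open Polynomial

-- antiderivative of a polynomial
lemma poly_antideriv (p : Polynomial ℂ) : ∃ q : Polynomial ℂ, derivative q = p := by
  induction p using Polynomial.induction_on' with
  | add f g hf hg =>
    obtain ⟨qf, hqf⟩ := hf; obtain ⟨qg, hqg⟩ := hg
    exact ⟨qf + qg, by simp [hqf, hqg]⟩
  | monomial n c =>
    refine ⟨C (c / (n + 1)) * X ^ (n + 1), ?_⟩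
    rw [derivative_C_mul, derivative_X_pow, ← mul_assoc, ← C_mul, Nat.add_sub_cancel,
      Nat.cast_add, Nat.cast_one, div_mul_cancel₀ _ (Nat.cast_add_one_ne_zero n),
      C_mul_X_pow_eq_monomial]

lemma poly_antideriv_iter (n : ℕ) (p : Polynomial ℂ) :
    ∃ q : Polynomial ℂ, derivative^[n] q = p := by
  induction n generalizing p with
  | zero => exact ⟨p, rfl⟩
  | succ n ih =>
    obtain ⟨q, hq⟩ := ih p
    obtain ⟨r, hr⟩ := poly_antideriv q
    exact ⟨r, by rw [Function.iterate_succ_apply, hr, hq]⟩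

lemma delta_iterate_poly (δ : RatFunc ℂ → RatFunc ℂ)
    (hder : ∀ p : Polynomial ℂ,
      δ (algebraMap (Polynomial ℂ) (RatFunc ℂ) p) =
        algebraMap (Polynomial ℂ) (RatFunc ℂ) (Polynomial.derivative p))
    (n : ℕ) (p : Polynomial ℂ) :
    δ^[n] (algebraMap (Polynomial ℂ) (RatFunc ℂ) p) =
      algebraMap (Polynomial ℂ) (RatFunc ℂ) (derivative^[n] p) := by
  induction n generalizing p with
  | zero => rfl
  | succ n ih =>
    rw [Function.iterate_succ_apply, hder, ih, Function.iterate_succ_apply]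

-- quotient rule
lemma delta_eq_div (δ : RatFunc ℂ → RatFunc ℂ)
    (hmul : ∀ a b : RatFunc ℂ, δ (a * b) = a * δ b + b * δ a)
    (hder : ∀ p : Polynomial ℂ,
      δ (algebraMap (Polynomial ℂ) (RatFunc ℂ) p) =
        algebraMap (Polynomial ℂ) (RatFunc ℂ) (Polynomial.derivative p))
    (g : RatFunc ℂ) :
    δ g = algebraMap (Polynomial ℂ) (RatFunc ℂ)
        (derivative g.num * g.denom - g.num * derivative g.denom) /
      algebraMap (Polynomial ℂ) (RatFunc ℂ) (g.denom ^ 2) := by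
  set N := g.num
  set D := g.denom
  have hD : algebraMap (Polynomial ℂ) (RatFunc ℂ) D ≠ 0 :=
    RatFunc.algebraMap_ne_zero (RatFunc.denom_ne_zero g)
  have h1 : g * algebraMap (Polynomial ℂ) (RatFunc ℂ) D
      = algebraMap (Polynomial ℂ) (RatFunc ℂ) N := by
    rw [← RatFunc.num_div_denom g, div_mul_cancel₀ _ hD]
  have h2 := congrArg δ h1
  rw [hmul, hder, hder] at h2
  have hg : g = algebraMap (Polynomial ℂ) (RatFunc ℂ) N /
      algebraMap (Polynomial ℂ) (RatFunc ℂ) D := (RatFunc.num_div_denom g).symm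
  rw [hg] at h2 ⊢
  field_simp [map_sub, map_mul, map_pow] at h2 ⊢
  simp only [map_sub, map_mul, map_pow]
  linear_combination h2

lemma denom_delta_dvd (δ : RatFunc ℂ → RatFunc ℂ)
    (hmul : ∀ a b : RatFunc ℂ, δ (a * b) = a * δ b + b * δ a)
    (hder : ∀ p : Polynomial ℂ,
      δ (algebraMap (Polynomial ℂ) (RatFunc ℂ) p) =
        algebraMap (Polynomial ℂ) (RatFunc ℂ) (Polynomial.derivative p))
    (g : RatFunc ℂ) : (δ g).denom ∣ g.denom ^ 2 :=
  (RatFunc.denom_dvd (pow_ne_zero 2 (RatFunc.denom_ne_zero g))).mpr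
    ⟨_, delta_eq_div δ hmul hder g⟩

lemma rootMult_B0 (δ : RatFunc ℂ → RatFunc ℂ)
    (hmul : ∀ a b : RatFunc ℂ, δ (a * b) = a * δ b + b * δ a)
    (hder : ∀ p : Polynomial ℂ,
      δ (algebraMap (Polynomial ℂ) (RatFunc ℂ) p) =
        algebraMap (Polynomial ℂ) (RatFunc ℂ) (Polynomial.derivative p))
    (g : RatFunc ℂ) (a : ℂ) (h : rootMultiplicity a g.denom = 0) :
    rootMultiplicity a (δ g).denom = 0 := by
  apply rootMultiplicity_eq_zero
  intro hroot
  have h1 : ¬ g.denom.IsRoot a := by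
    intro hr
    have := (rootMultiplicity_pos (RatFunc.denom_ne_zero g)).mpr hr
    omega
  have h2 : (g.denom ^ 2).IsRoot a := by
    obtain ⟨c, hc⟩ := denom_delta_dvd δ hmul hder g
    simp only [Polynomial.IsRoot, hc, eval_mul] at hroot ⊢
    exact mul_eq_zero_of_left hroot _
  simp only [Polynomial.IsRoot, eval_pow] at h2
  exact h1 (pow_eq_zero_iff (n := 2) (by norm_num) |>.mp h2)

lemma rootMult_Bsucc (δ : RatFunc ℂ → RatFunc ℂ)
    (hmul : ∀ a b : RatFunc ℂ, δ (a * b) = a * δ b + b * δ a)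
    (hder : ∀ p : Polynomial ℂ,
      δ (algebraMap (Polynomial ℂ) (RatFunc ℂ) p) =
        algebraMap (Polynomial ℂ) (RatFunc ℂ) (Polynomial.derivative p))
    (g : RatFunc ℂ) (a : ℂ) (hk : 1 ≤ rootMultiplicity a g.denom) :
    rootMultiplicity a (δ g).denom = rootMultiplicity a g.denom + 1 := by
  set N := g.num with hNdef
  set D := g.denom with hDdef
  have hD0 : D ≠ 0 := RatFunc.denom_ne_zero g
  set π : Polynomial ℂ := X - C a with hπ
  obtain ⟨m, hm⟩ : ∃ m, rootMultiplicity a D = m + 1 :=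
    ⟨rootMultiplicity a D - 1, by omega⟩
  obtain ⟨r, hD, hr⟩ := D.exists_eq_pow_rootMultiplicity_mul_and_not_dvd hD0 a
  rw [hm] at hD
  have hra : r.eval a ≠ 0 := fun h => hr (dvd_iff_isRoot.mpr h)
  have hNa : N.eval a ≠ 0 := by
    intro h
    have hdvdN : π ∣ N := dvd_iff_isRoot.mpr h
    have hdvdD : π ∣ D :=
      dvd_trans (dvd_pow_self π (Nat.succ_ne_zero m)) (hD ▸ dvd_mul_right _ _)
    exact not_isUnit_X_sub_C a
      ((RatFunc.isCoprime_num_denom g).isUnit_of_dvd' hdvdN hdvdD)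
  set W : Polynomial ℂ :=
    π * (derivative N * r - N * derivative r) - C ((m : ℂ) + 1) * N * r with hWdef
  have hWa : W.eval a ≠ 0 := by
    simp only [hWdef, hπ, eval_sub, eval_mul, eval_add, eval_X, eval_C, sub_self,
      zero_mul, zero_sub, neg_ne_zero]
    exact mul_ne_zero (mul_ne_zero (Nat.cast_add_one_ne_zero m) hNa) hra
  set M : Polynomial ℂ := derivative N * D - N * derivative D with hMdef
  have hM : M = π ^ m * W := by
    rw [hMdef, hWdef, hD, derivative_mul, derivative_pow, derivative_X_sub_C, hπ]
    push_cast
    ring_nf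
  have hW0 : W ≠ 0 := fun h => hWa (by rw [h, eval_zero])
  have hM0 : M ≠ 0 := by
    rw [hM]; exact mul_ne_zero (pow_ne_zero _ (X_sub_C_ne_zero a)) hW0
  have hMmult : rootMultiplicity a M = m := by
    rw [hM, rootMultiplicity_mul (hM ▸ hM0), rootMultiplicity_X_sub_C_pow,
      rootMultiplicity_eq_zero (fun h => hWa h), add_zero]
  have hdiv := delta_eq_div δ hmul hder g
  have heq : (δ g).num * D ^ 2 = M * (δ g).denom := by
    apply RatFunc.algebraMap_injective
    rw [map_mul, map_mul]
    have h1 := RatFunc.num_div_denom (δ g)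
    conv_rhs at h1 => rw [hdiv]
    rw [div_eq_div_iff (RatFunc.algebraMap_ne_zero (RatFunc.denom_ne_zero (δ g)))
      (RatFunc.algebraMap_ne_zero (pow_ne_zero 2 hD0))] at h1
    exact h1
  have hprod1 : (δ g).num * D ^ 2 ≠ 0 := by
    rw [heq]
    exact mul_ne_zero hM0 (RatFunc.denom_ne_zero (δ g))
  have h2 : rootMultiplicity a ((δ g).num) + rootMultiplicity a (D ^ 2) =
      rootMultiplicity a M + rootMultiplicity a ((δ g).denom) := by
    rw [← rootMultiplicity_mul hprod1, ← rootMultiplicity_mul (heq ▸ hprod1), heq]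
  have hD2 : rootMultiplicity a (D ^ 2) = 2 * (m + 1) := by
    rw [pow_two, rootMultiplicity_mul (mul_ne_zero hD0 hD0), hm]; ring
  have hnum : rootMultiplicity a (δ g).num = 0 := by
    by_contra h
    have hd1 : π ∣ (δ g).num :=
      dvd_trans (dvd_pow_self π (by omega)) ((δ g).num.pow_rootMultiplicity_dvd a)
    have hden : 1 ≤ rootMultiplicity a (δ g).denom := by omega
    have hd2 : π ∣ (δ g).denom :=
      dvd_trans (dvd_pow_self π (by omega)) ((δ g).denom.pow_rootMultiplicity_dvd a)
    exact not_isUnit_X_sub_C a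
      ((RatFunc.isCoprime_num_denom (δ g)).isUnit_of_dvd' hd1 hd2)
  omega

lemma rootMult_iter (δ : RatFunc ℂ → RatFunc ℂ)
    (hmul : ∀ a b : RatFunc ℂ, δ (a * b) = a * δ b + b * δ a)
    (hder : ∀ p : Polynomial ℂ,
      δ (algebraMap (Polynomial ℂ) (RatFunc ℂ) p) =
        algebraMap (Polynomial ℂ) (RatFunc ℂ) (Polynomial.derivative p))
    (a : ℂ) (n : ℕ) : ∀ g : RatFunc ℂ, 1 ≤ rootMultiplicity a (δ^[n] g).denom →
      1 ≤ rootMultiplicity a g.denom ∧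
        rootMultiplicity a (δ^[n] g).denom = rootMultiplicity a g.denom + n := by
  induction n with
  | zero => exact fun g h => ⟨h, rfl⟩
  | succ n ih =>
    intro g h
    rw [Function.iterate_succ_apply] at h ⊢
    obtain ⟨h1, h2⟩ := ih (δ g) h
    have hg : 1 ≤ rootMultiplicity a g.denom := by
      by_contra hc
      rw [rootMult_B0 δ hmul hder g a (by omega)] at h1
      omega
    rw [h2, rootMult_Bsucc δ hmul hder g a hg]
    omega

theorem stmt15 (δ : RatFunc ℂ → RatFunc ℂ)
    (hadd : ∀ a b : RatFunc ℂ, δ (a + b) = δ a + δ b)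
    (hmul : ∀ a b : RatFunc ℂ, δ (a * b) = a * δ b + b * δ a)
    (hder : ∀ p : Polynomial ℂ,
      δ (algebraMap (Polynomial ℂ) (RatFunc ℂ) p) =
        algebraMap (Polynomial ℂ) (RatFunc ℂ) (Polynomial.derivative p))
    (f : RatFunc ℂ) :
    (∀ n : ℕ, ∃ g : RatFunc ℂ, δ^[n] g = f) ↔
      ∃ p : Polynomial ℂ, f = algebraMap (Polynomial ℂ) (RatFunc ℂ) p := by
  constructor
  · intro hstable
    refine ⟨f.num, ?_⟩
    by_contra hf
    have hdenom : f.denom ≠ 1 := by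
      intro h1
      apply hf
      conv_lhs => rw [← RatFunc.num_div_denom f]
      rw [h1, map_one, div_one]
    have hdeg : 0 < f.denom.degree := by
      rcases lt_or_ge 0 f.denom.degree with h | h
      · exact h
      · exact absurd ((RatFunc.monic_denom f).degree_le_zero_iff_eq_one.mp h) hdenom
    obtain ⟨a, ha⟩ := Complex.exists_root hdeg
    have hm : 1 ≤ rootMultiplicity a f.denom :=
      (rootMultiplicity_pos (RatFunc.denom_ne_zero f)).mpr ha
    obtain ⟨g, hg⟩ := hstable (rootMultiplicity a f.denom)
    have := rootMult_iter δ hmul hder a (rootMultiplicity a f.denom) g (by rw [hg]; exact hm)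
    rw [hg] at this
    omega
  · rintro ⟨p, rfl⟩
    intro n
    obtain ⟨q, hq⟩ := poly_antideriv_iter n p
    exact ⟨algebraMap (Polynomial ℂ) (RatFunc ℂ) q, by
      rw [delta_iterate_poly δ hder, hq]⟩
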